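/- Under the stated hypotheses, the cyclic code C of length n over F with defining set of exponents Z = L ∪ D has locality r: for every coordinate position i ∈ {0, …, n−1} there exist a set R ⊆ {0, …, n−1}\{i} with |R| ≤ r and scalars (λ_j)_{j∈R} in F such that c_i = Σ_{j∈R} λ_j c_j for every codeword c ∈ C. -/

import Mathlib

lemma ne_zero_of_orderOf_pos {F : Type*} [MonoidWithZero F] [Nontrivial F] {x : F} {m : ℕ}
    (hm : 0 < m) (hx : orderOf x = m) : x ≠ 0 := by
  rintro rfl
  have : orderOf (0 : F) = 0 := by
    rw [orderOf_eq_zero_iff']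
    intro j hj h
    rw [zero_pow (by omega : j ≠ 0)] at h
    exact one_ne_zero h.symm
  omega

lemma castOrd_ne_zero {F : Type*} [Field F] [Fintype F] {α : F} {n : ℕ}
    (hn : 0 < n) (hα : orderOf α = n) : (n : F) ≠ 0 := by
  classical
  have hα0 : α ≠ 0 := ne_zero_of_orderOf_pos hn hα
  have hdvd : n ∣ Fintype.card F - 1 := by
    have := orderOf_dvd_card (G := Fˣ) (x := Units.mk0 α hα0)
    rwa [← orderOf_units, Units.val_mk0, hα, Fintype.card_units] at this
  intro h0
  set p := ringChar F with hp
  haveI : CharP F p := ringChar.charP F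
  have hprime : p.Prime := CharP.char_is_prime F p
  have hpn : p ∣ n := (CharP.cast_eq_zero_iff F p n).mp h0
  obtain ⟨m, -, hcard⟩ := FiniteField.card F p
  have hpcard : p ∣ Fintype.card F := hcard ▸ dvd_pow_self p m.pos.ne'
  have h1 : 0 < Fintype.card F := Fintype.card_pos
  have : p ∣ 1 := by
    have h2 := Nat.dvd_sub hpcard (dvd_trans hpn hdvd)
    have : Fintype.card F - (Fintype.card F - 1) = 1 := by omega
    rwa [this] at h2
  exact Nat.Prime.one_lt hprime |>.ne' (Nat.dvd_one.mp this)

/-- Key: the sum of codeword coordinates over any residue class mod `n/(r+1)` vanishes. -/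
lemma classSum {F : Type*} [Field F] [Fintype F] {n r : ℕ}
    (hn : 0 < n) (α : F) (hα : orderOf α = n) (hr1n : r + 1 ∣ n)
    (c : Fin n → F)
    (hc : ∀ m : ℕ, m < n / (r + 1) →
      ∑ j : Fin n, c j * α ^ ((j : ℕ) * ((r + 1) * m)) = 0)
    (a : Fin n) :
    ∑ j ∈ Finset.univ.filter
      (fun j : Fin n => (j : ℕ) % (n / (r + 1)) = (a : ℕ) % (n / (r + 1))), c j = 0 := by
  classical
  set n' := n / (r + 1) with hn'def
  have hnn : n' * (r + 1) = n := Nat.div_mul_cancel hr1n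
  have hn' : 0 < n' := Nat.div_pos (Nat.le_of_dvd hn hr1n) (by omega)
  set β := α ^ (r + 1) with hβdef
  have hβord : orderOf β = n' := by
    rw [hβdef, orderOf_pow' α (by omega : r + 1 ≠ 0), hα, Nat.gcd_eq_right hr1n]
  have hβ0 : β ≠ 0 := ne_zero_of_orderOf_pos hn' hβord
  have hβn' : β ^ n' = 1 := by rw [← hβord]; exact pow_orderOf_eq_one β
  have geo : ∀ x : F, x ^ n' = 1 →
      ∑ m ∈ Finset.range n', x ^ m = if x = 1 then (n' : F) else 0 := by
    intro x hx
    by_cases h1 : x = 1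
    · simp [h1]
    · rw [if_neg h1]
      have := geom_sum_mul x n'
      rw [hx, sub_self] at this
      rcases mul_eq_zero.mp this with h | h
      · exact h
      · exact absurd (sub_eq_zero.mp h) h1
  have hpow1 : ∀ m : ℕ, (β ^ m) ^ n' = 1 := by
    intro m
    rw [← pow_mul, mul_comm, pow_mul, hβn', one_pow]
  have hx : ∀ j : Fin n, ((β ^ (a : ℕ))⁻¹ * β ^ (j : ℕ)) ^ n' = 1 := by
    intro j
    rw [mul_pow, inv_pow, hpow1, hpow1, inv_one, one_mul]
  have hxeq : ∀ j : Fin n,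
      (((β ^ (a : ℕ))⁻¹ * β ^ (j : ℕ)) = 1) ↔ ((j : ℕ) % n' = (a : ℕ) % n') := by
    intro j
    rw [inv_mul_eq_one₀ (pow_ne_zero _ hβ0)]
    set u : Fˣ := Units.mk0 β hβ0 with hu
    have horder : orderOf u = n' := by
      rw [← orderOf_units]
      simpa [hu] using hβord
    have key : β ^ (a : ℕ) = β ^ (j : ℕ) ↔ (a : ℕ) ≡ (j : ℕ) [MOD n'] := by
      rw [show β ^ (a : ℕ) = ((u ^ (a : ℕ) : Fˣ) : F) by simp [hu],
        show β ^ (j : ℕ) = ((u ^ (j : ℕ) : Fˣ) : F) by simp [hu],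
        ← Units.ext_iff, pow_eq_pow_iff_modEq, horder]
    rw [key]
    exact ⟨fun h => h.symm, fun h => h.symm⟩
  have hS : ∑ m ∈ Finset.range n',
      ((β ^ (a : ℕ))⁻¹) ^ m * (∑ j : Fin n, c j * β ^ ((j : ℕ) * m)) = 0 := by
    refine Finset.sum_eq_zero fun m hm => ?_
    have hinner : (∑ j : Fin n, c j * β ^ ((j : ℕ) * m)) = 0 := by
      rw [← hc m (Finset.mem_range.mp hm)]
      refine Finset.sum_congr rfl fun j _ => ?_
      congr 1
      rw [hβdef, ← pow_mul]
      congr 1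
      ring
    rw [hinner, mul_zero]
  have hS2 : ∑ m ∈ Finset.range n',
      ((β ^ (a : ℕ))⁻¹) ^ m * (∑ j : Fin n, c j * β ^ ((j : ℕ) * m))
      = ∑ j : Fin n, c j * ∑ m ∈ Finset.range n',
          ((β ^ (a : ℕ))⁻¹ * β ^ (j : ℕ)) ^ m := by
    calc ∑ m ∈ Finset.range n',
        ((β ^ (a : ℕ))⁻¹) ^ m * (∑ j : Fin n, c j * β ^ ((j : ℕ) * m))
        = ∑ m ∈ Finset.range n', ∑ j : Fin n,
            c j * ((β ^ (a : ℕ))⁻¹ * β ^ (j : ℕ)) ^ m := by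
          refine Finset.sum_congr rfl fun m _ => ?_
          rw [Finset.mul_sum]
          refine Finset.sum_congr rfl fun j _ => ?_
          rw [mul_pow, pow_mul]
          ring
      _ = ∑ j : Fin n, ∑ m ∈ Finset.range n',
            c j * ((β ^ (a : ℕ))⁻¹ * β ^ (j : ℕ)) ^ m := Finset.sum_comm
      _ = _ := by
          refine Finset.sum_congr rfl fun j _ => ?_
          rw [Finset.mul_sum]
  have hfin : (0 : F) = (∑ j ∈ Finset.univ.filter
      (fun j : Fin n => (j : ℕ) % n' = (a : ℕ) % n'), c j) * (n' : F) := by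
    calc (0 : F) = ∑ j : Fin n, c j * ∑ m ∈ Finset.range n',
          ((β ^ (a : ℕ))⁻¹ * β ^ (j : ℕ)) ^ m := by rw [← hS2, hS]
      _ = ∑ j : Fin n, c j *
            (if (j : ℕ) % n' = (a : ℕ) % n' then (n' : F) else 0) := by
          refine Finset.sum_congr rfl fun j _ => ?_
          rw [geo _ (hx j)]
          congr 1
          exact if_congr (hxeq j) rfl rfl
      _ = ∑ j : Fin n,
            (if (j : ℕ) % n' = (a : ℕ) % n' then c j * (n' : F) else 0) := by
          refine Finset.sum_congr rfl fun j _ => ?_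
          rw [mul_ite, mul_zero]
      _ = ∑ j ∈ Finset.univ.filter
            (fun j : Fin n => (j : ℕ) % n' = (a : ℕ) % n'), c j * (n' : F) :=
          (Finset.sum_filter _ _).symm
      _ = _ := (Finset.sum_mul _ _ _).symm
  have hne : (n' : F) ≠ 0 := castOrd_ne_zero hn' hβord
  rcases mul_eq_zero.mp hfin.symm with h | h
  · exact h
  · exact absurd h hne



/-- The cyclic code of length `n` with defining set of exponents `Z`:
codewords have entries in the field `K`, and parity checks are computed in
the field `F` via the ring homomorphism `φ`, using powers of `α`. -/
def cyclicCode {K F : Type*} [Field K] [Field F] (φ : K →+* F) (n : ℕ) (α : F)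
    (Z : Set ℕ) : Submodule K (Fin n → K) where
  carrier := {c | ∀ z ∈ Z, ∑ i : Fin n, φ (c i) * α ^ ((i : ℕ) * z) = 0}
  add_mem' := by
    intro a b ha hb z hz
    have h : (∑ i : Fin n, φ ((a + b) i) * α ^ ((i : ℕ) * z))
        = (∑ i : Fin n, φ (a i) * α ^ ((i : ℕ) * z))
          + ∑ i : Fin n, φ (b i) * α ^ ((i : ℕ) * z) := by
      rw [← Finset.sum_add_distrib]
      refine Finset.sum_congr rfl fun i _ => ?_
      simp [add_mul]
    rw [h, ha z hz, hb z hz, add_zero]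
  zero_mem' := by intro z hz; simp
  smul_mem' := by
    intro c a ha z hz
    have h : (∑ i : Fin n, φ ((c • a) i) * α ^ ((i : ℕ) * z))
        = φ c * ∑ i : Fin n, φ (a i) * α ^ ((i : ℕ) * z) := by
      rw [Finset.mul_sum]
      refine Finset.sum_congr rfl fun i _ => ?_
      simp [mul_assoc]
    rw [h, ha z hz, mul_zero]

/-- The dual of a code: all vectors orthogonal to every codeword. -/
def dualCode {K : Type*} [Field K] {n : ℕ} (C : Set (Fin n → K)) : Set (Fin n → K) :=
  {x | ∀ c ∈ C, ∑ i : Fin n, x i * c i = 0}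

/-- A linear code is LCD if its intersection with its dual is `{0}`. -/
def IsLCD {K : Type*} [Field K] {n : ℕ} (C : Submodule K (Fin n → K)) : Prop :=
  (C : Set (Fin n → K)) ∩ dualCode (C : Set (Fin n → K)) = {0}

/-- A code has locality `r` if every coordinate position `i` is recoverable as a fixed
linear combination of at most `r` other coordinate positions, uniformly over all codewords. -/
def HasLocality {K : Type*} [Field K] {n : ℕ} (C : Set (Fin n → K)) (r : ℕ) : Prop :=
  ∀ i : Fin n, ∃ (R : Finset (Fin n)) (lam : Fin n → K),
    i ∉ R ∧ R.card ≤ r ∧ ∀ c ∈ C, c i = ∑ j ∈ R, lam j * c j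

/-- The `q`-cyclotomic coset of `a` modulo `n`:
`[a] = {a·q^j mod n : j = 0, 1, 2, …}` (natural number version). -/
def cycCoset (q n a : ℕ) : Set ℕ := {b | ∃ j : ℕ, b = a * q ^ j % n}

/-- Theorem 3.3: under the stated hypotheses, the cyclic code of length `n` over `F`
with defining set of exponents `Z = L ∪ D` has locality `r`. -/
theorem stmt14
    (F : Type*) [Field F] [Fintype F] (n k r : ℕ)
    (hn : 0 < n) (hk : 0 < k) (hr : 0 < r) (hrk : r ≤ k)
    (α : F) (hα : orderOf α = n)
    (hr1n : r + 1 ∣ n) (hrdk : r ∣ k) (hkn : k * (r + 1) ≤ n * r)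
    (heven : Even (n / (r + 1) - k / r))
    (t : ℕ) (ht : t = (n - k * (r + 1) / r) / 2)
    (L D : Set ℕ)
    (hL : L = {i | i < n ∧ (r + 1) ∣ i})
    (hD : D = {d : ℕ | ∃ s : ℤ, -(t : ℤ) ≤ s ∧ s ≤ (t : ℤ) ∧ (d : ℤ) = s % (n : ℤ)})
    : HasLocality (↑(cyclicCode (RingHom.id F) n α (L ∪ D)) : Set (Fin n → F)) r := by
  classical
  intro i
  set n' := n / (r + 1) with hn'def
  have hnn : n' * (r + 1) = n := Nat.div_mul_cancel hr1n
  have hn' : 0 < n' := Nat.div_pos (Nat.le_of_dvd hn hr1n) (by omega)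
  set R : Finset (Fin n) :=
    (Finset.univ.filter (fun j : Fin n => (j : ℕ) % n' = (i : ℕ) % n')).erase i with hR
  refine ⟨R, fun _ => -1, Finset.notMem_erase i _, ?_, ?_⟩
  · -- cardinality bound
    have hcomm : (r + 1) * n' = n := by rw [mul_comm]; exact hnn
    have hidiv : (i : ℕ) / n' ∈ Finset.range (r + 1) := by
      refine Finset.mem_range.mpr ((Nat.div_lt_iff_lt_mul hn').mpr ?_)
      have := i.isLt
      omega
    have hcardT : ((Finset.range (r + 1)).erase ((i : ℕ) / n')).card = r := by
      rw [Finset.card_erase_of_mem hidiv, Finset.card_range]; omega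
    calc R.card ≤ ((Finset.range (r + 1)).erase ((i : ℕ) / n')).card := by
          refine Finset.card_le_card_of_injOn (fun j => (j : ℕ) / n') ?_ ?_
          · intro j hj
            rw [Finset.mem_coe] at hj ⊢
            rw [Finset.mem_erase, Finset.mem_filter] at hj
            obtain ⟨hji, -, hjm⟩ := hj
            refine Finset.mem_erase.mpr ⟨?_, ?_⟩
            · intro hdiv
              apply hji
              have e1 := Nat.div_add_mod (j : ℕ) n'
              have e2 := Nat.div_add_mod (i : ℕ) n'
              have : (j : ℕ) = (i : ℕ) := by
                rw [← e1, ← e2, show (j : ℕ) / n' = (i : ℕ) / n' from hdiv, hjm]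
              exact Fin.ext this
            · refine Finset.mem_range.mpr ((Nat.div_lt_iff_lt_mul hn').mpr ?_)
              have := j.isLt
              omega
          · intro j1 hj1 j2 hj2 hdiv
            simp only [hR, Finset.coe_erase, Set.mem_diff, Finset.coe_filter,
              Set.mem_setOf_eq] at hj1 hj2
            have hm1 : (j1 : ℕ) % n' = (i : ℕ) % n' := hj1.1.2
            have hm2 : (j2 : ℕ) % n' = (i : ℕ) % n' := hj2.1.2
            have e1 := Nat.div_add_mod (j1 : ℕ) n'
            have e2 := Nat.div_add_mod (j2 : ℕ) n'
            refine Fin.ext ?_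
            rw [← e1, ← e2, show (j1 : ℕ) / n' = (j2 : ℕ) / n' from hdiv, hm1, hm2]
      _ = r := hcardT
  · -- recovery
    intro c hcmem
    have hc' : ∀ z ∈ L ∪ D, ∑ j : Fin n, c j * α ^ ((j : ℕ) * z) = 0 := by
      intro z hz
      simpa using hcmem z hz
    have hc : ∀ m : ℕ, m < n / (r + 1) →
        ∑ j : Fin n, c j * α ^ ((j : ℕ) * ((r + 1) * m)) = 0 := by
      intro m hm
      refine hc' ((r + 1) * m) (Or.inl ?_)
      rw [hL]
      refine ⟨?_, ⟨m, rfl⟩⟩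
      have hcomm : (r + 1) * n' = n := by rw [mul_comm]; exact hnn
      have : (r + 1) * m < (r + 1) * n' :=
        mul_lt_mul_of_pos_left hm (by omega : (0 : ℕ) < r + 1)
      omega
    have key := classSum hn α hα hr1n c hc i
    have hmemfilter : i ∈ Finset.univ.filter
        (fun j : Fin n => (j : ℕ) % (n / (r + 1)) = (i : ℕ) % (n / (r + 1))) :=
      Finset.mem_filter.mpr ⟨Finset.mem_univ i, rfl⟩
    rw [← Finset.insert_erase hmemfilter,
      Finset.sum_insert (Finset.notMem_erase i _)] at key
    have : c i = -∑ j ∈ R, c j := by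
      rw [hR, hn'def]
      exact eq_neg_of_add_eq_zero_left key
    rw [this]
    rw [Finset.sum_congr rfl fun j _ => neg_one_mul (c j)]
    rw [Finset.sum_neg_distrib]
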